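/- Let C be a Type I binary self-dual code of length 4n+2 with minimum distance d+2, where d ≡ 0 mod 4 and d ≠ 0, and whose shadow has minimum weight s ≥ 3. Then there exist two coordinates of C on which the subtraction of (11) yields a binary self-dual [4n, 2n] code C' of minimum distance d whose shadow has minimum weight s−1. -/

import Mathlib

open Finset

/-- Hamming weight of a binary vector. -/
def wt {n : ℕ} (v : Fin n → ZMod 2) : ℕ := (Finset.univ.filter (fun i => v i ≠ 0)).card

/-- Standard inner product over GF(2). -/
def inn {n : ℕ} (u v : Fin n → ZMod 2) : ZMod 2 := ∑ i, u i * v i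

/-- A code is self-dual if it equals its dual. -/
def IsSelfDual {n : ℕ} (C : Submodule (ZMod 2) (Fin n → ZMod 2)) : Prop :=
  ∀ v, v ∈ C ↔ ∀ c ∈ C, inn v c = 0

/-- `C` has minimum distance (weight) `d`. -/
def HasMinDist {n : ℕ} (C : Submodule (ZMod 2) (Fin n → ZMod 2)) (d : ℕ) : Prop :=
  (∃ c ∈ C, c ≠ 0 ∧ wt c = d) ∧ ∀ c ∈ C, c ≠ 0 → d ≤ wt c

/-- The shadow `S = C₀^⊥ \ C`, where `C₀` is the doubly-even subcode of `C`. -/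
def shadow {n : ℕ} (C : Submodule (ZMod 2) (Fin n → ZMod 2)) : Set (Fin n → ZMod 2) :=
  {v | ∀ c ∈ C, wt c % 4 = 0 → inn v c = 0} \ (C : Set (Fin n → ZMod 2))

/-- Covering radius of a code. -/
noncomputable def coveringRadius {n : ℕ} (C : Submodule (ZMod 2) (Fin n → ZMod 2)) : ℕ :=
  sInf {R | ∀ v : Fin n → ZMod 2, ∃ c ∈ C, wt (v - c) ≤ R}

/-- Prepend two coordinates to a vector. -/
def vcons2 {k : ℕ} (a b : ZMod 2) (v : Fin k → ZMod 2) : Fin (k + 2) → ZMod 2 :=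
  Fin.cons a (Fin.cons b v)

lemma zc (x : ZMod 2) : x = 0 ∨ x = 1 := by revert x; decide

lemma inn_comm {n : ℕ} (u v : Fin n → ZMod 2) : inn u v = inn v u := by
  unfold inn; exact Finset.sum_congr rfl (fun i _ => mul_comm _ _)

lemma inn_add_right {n : ℕ} (u v w : Fin n → ZMod 2) : inn u (v + w) = inn u v + inn u w := by
  unfold inn; rw [← Finset.sum_add_distrib]
  exact Finset.sum_congr rfl (fun i _ => by simp [Pi.add_apply, mul_add])

lemma wt_cast {n : ℕ} (v : Fin n → ZMod 2) : (wt v : ZMod 2) = ∑ i, v i := by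
  unfold wt
  rw [Finset.card_filter]
  push_cast
  refine Finset.sum_congr rfl (fun i _ => ?_)
  rcases zc (v i) with h | h <;> simp [h]

lemma inn_self {n : ℕ} (v : Fin n → ZMod 2) : inn v v = (wt v : ZMod 2) := by
  rw [wt_cast]; unfold inn
  refine Finset.sum_congr rfl (fun i _ => ?_)
  rcases zc (v i) with h | h <;> simp [h]

lemma inn_eq_card {n : ℕ} (u v : Fin n → ZMod 2) :
    inn u v = ((Finset.univ.filter (fun i => u i ≠ 0 ∧ v i ≠ 0)).card : ZMod 2) := by
  rw [Finset.card_filter]; unfold inn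
  push_cast
  refine Finset.sum_congr rfl (fun i _ => ?_)
  rcases zc (u i) with h | h <;> rcases zc (v i) with h' | h' <;> simp [h, h']

lemma wt_add_wt {n : ℕ} (u v : Fin n → ZMod 2) :
    wt u + wt v = wt (u + v) + 2 * (Finset.univ.filter (fun i => u i ≠ 0 ∧ v i ≠ 0)).card := by
  unfold wt
  rw [Finset.card_filter, Finset.card_filter, Finset.card_filter, Finset.card_filter,
    ← Finset.sum_add_distrib, Finset.mul_sum, ← Finset.sum_add_distrib]
  refine Finset.sum_congr rfl (fun i _ => ?_)
  rcases zc (u i) with h | h <;> rcases zc (v i) with h' | h' <;>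
    simp [h, h', Pi.add_apply] <;> decide

lemma wt_add_mod4 {n : ℕ} {u v : Fin n → ZMod 2} (h : inn u v = 0) :
    wt (u + v) % 4 = (wt u + wt v) % 4 := by
  have h2 := wt_add_wt u v
  have hc : (2 : ℕ) ∣ (Finset.univ.filter (fun i => u i ≠ 0 ∧ v i ≠ 0)).card := by
    rw [inn_eq_card] at h
    exact (ZMod.natCast_eq_zero_iff _ 2).mp h
  obtain ⟨m, hm⟩ := hc
  omega

lemma wt_even_of_inn_self {n : ℕ} {v : Fin n → ZMod 2} (h : inn v v = 0) : wt v % 2 = 0 := by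
  rw [inn_self] at h
  have := (ZMod.natCast_eq_zero_iff _ 2).mp h
  omega

lemma wt_zero {n : ℕ} : wt (0 : Fin n → ZMod 2) = 0 := by simp [wt]

lemma wt_ne_zero {n : ℕ} {v : Fin n → ZMod 2} (h : v ≠ 0) : wt v ≠ 0 := by
  intro h0
  apply h
  funext i
  by_contra hi
  have hm : i ∈ Finset.univ.filter (fun i => v i ≠ 0) := by
    simp only [Finset.mem_filter, Finset.mem_univ, true_and]
    simpa using hi
  have : (Finset.univ.filter (fun i => v i ≠ 0)) = ∅ := Finset.card_eq_zero.mp h0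
  simp [this] at hm

noncomputable def BF (n : ℕ) : LinearMap.BilinForm (ZMod 2) (Fin n → ZMod 2) :=
  LinearMap.mk₂ (ZMod 2) (fun u v => inn u v)
    (fun u u' v => by unfold inn; rw [← Finset.sum_add_distrib]; exact Finset.sum_congr rfl (fun i _ => by simp [add_mul])
    )
    (fun a u v => by unfold inn; rw [Finset.smul_sum]; exact Finset.sum_congr rfl (fun i _ => by simp [mul_assoc]))
    (fun u v v' => inn_add_right u v v')
    (fun a u v => by unfold inn; rw [Finset.smul_sum]; exact Finset.sum_congr rfl (fun i _ => by simp; ring))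

lemma BF_apply {n : ℕ} (u v : Fin n → ZMod 2) : BF n u v = inn u v := rfl

lemma BF_refl {n : ℕ} : (BF n).IsRefl := by
  intro u v h
  rw [BF_apply, inn_comm] at h
  exact h

lemma BF_nondeg {n : ℕ} : (BF n).Nondegenerate := by
  refine (LinearMap.IsRefl.nondegenerate_iff_separatingLeft BF_refl).mpr ?_
  intro u h
  funext i
  have := h (Pi.single i 1)
  rw [BF_apply] at this
  unfold inn at this
  rw [Finset.sum_eq_single i] at this
  · simpa using this
  · intro b _ hb; simp [Pi.single_apply, hb]
  · simp

lemma finrank_dual {n : ℕ} (C : Submodule (ZMod 2) (Fin n → ZMod 2)) :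
    Module.finrank (ZMod 2) ((BF n).orthogonal C) = n - Module.finrank (ZMod 2) C := by
  rw [LinearMap.BilinForm.finrank_orthogonal BF_nondeg]
  simp

lemma mem_orth_iff {n : ℕ} (C : Submodule (ZMod 2) (Fin n → ZMod 2)) (v : Fin n → ZMod 2) :
    v ∈ (BF n).orthogonal C ↔ ∀ c ∈ C, inn v c = 0 := by
  constructor
  · intro h c hc
    rw [inn_comm]
    exact h c hc
  · intro h c hc
    show BF n c v = 0
    rw [BF_apply, inn_comm]
    exact h c hc

lemma selfdual_iff {n : ℕ} (C : Submodule (ZMod 2) (Fin n → ZMod 2)) :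
    IsSelfDual C ↔ (BF n).orthogonal C = C := by
  constructor
  · intro h
    ext v
    rw [mem_orth_iff]
    exact (h v).symm
  · intro h v
    rw [← mem_orth_iff, h]

lemma finrank_of_selfdual {n : ℕ} {C : Submodule (ZMod 2) (Fin n → ZMod 2)}
    (h : IsSelfDual C) : 2 * Module.finrank (ZMod 2) C = n := by
  have h1 := finrank_dual C
  rw [(selfdual_iff C).mp h] at h1
  have h2 : Module.finrank (ZMod 2) C ≤ n := by
    simpa using Submodule.finrank_le C
  omega

lemma selfdual_of_selforth {n : ℕ} {C : Submodule (ZMod 2) (Fin n → ZMod 2)}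
    (horth : ∀ u ∈ C, ∀ v ∈ C, inn u v = 0)
    (hrank : 2 * Module.finrank (ZMod 2) C = n) : IsSelfDual C := by
  rw [selfdual_iff]
  have hle : C ≤ (BF n).orthogonal C := by
    intro v hv
    rw [mem_orth_iff]
    exact fun c hc => horth v hv c hc
  have := finrank_dual C
  refine (Submodule.eq_of_le_of_finrank_le hle ?_).symm
  omega
-- split section
section Split
variable {k : ℕ} {i j : Fin (k+2)} {f : Fin k → Fin (k+2)}

lemma image_eq (hf : Function.Injective f)
    (hr : Set.range f = ({i, j} : Set (Fin (k+2)))ᶜ) :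
    Finset.image f Finset.univ = Finset.univ.filter (fun m => ¬(m = i ∨ m = j)) := by
  ext m
  simp only [Finset.mem_image, Finset.mem_filter, Finset.mem_univ, true_and]
  constructor
  · rintro ⟨t, _, rfl⟩
    have : f t ∈ Set.range f := ⟨t, rfl⟩
    rw [hr] at this
    simpa using this
  · intro h
    have : m ∈ Set.range f := by rw [hr]; simpa using h
    obtain ⟨t, ht⟩ := this
    exact ⟨t, by simp [ht]⟩

lemma sum_split {M : Type*} [AddCommMonoid M] (hij : i ≠ j) (hf : Function.Injective f)
    (hr : Set.range f = ({i, j} : Set (Fin (k+2)))ᶜ) (g : Fin (k+2) → M) :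
    ∑ m, g m = g i + g j + ∑ t, g (f t) := by
  rw [← Finset.sum_filter_add_sum_filter_not Finset.univ (fun m => m = i ∨ m = j) g]
  have h1 : Finset.univ.filter (fun m => m = i ∨ m = j) = {i, j} := by
    ext m; simp
  have h2 : ∑ m ∈ ({i, j} : Finset (Fin (k+2))), g m = g i + g j := by
    rw [Finset.sum_insert (by simpa using hij), Finset.sum_singleton]
  have h3 : ∑ t, g (f t) = ∑ m ∈ Finset.univ.filter (fun m => ¬(m = i ∨ m = j)), g m := by
    rw [← image_eq hf hr, Finset.sum_image (fun a _ b _ h => hf h)]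
  rw [h1, h2, h3]

lemma wt_split (hij : i ≠ j) (hf : Function.Injective f)
    (hr : Set.range f = ({i, j} : Set (Fin (k+2)))ᶜ) (c : Fin (k+2) → ZMod 2) :
    wt c = (if c i ≠ 0 then 1 else 0) + (if c j ≠ 0 then 1 else 0) + wt (c ∘ f) := by
  unfold wt
  rw [Finset.card_filter, Finset.card_filter,
    sum_split hij hf hr (fun m => if c m ≠ 0 then 1 else 0)]
  rfl

lemma inn_split (hij : i ≠ j) (hf : Function.Injective f)
    (hr : Set.range f = ({i, j} : Set (Fin (k+2)))ᶜ) (y c : Fin (k+2) → ZMod 2) :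
    inn y c = y i * c i + y j * c j + inn (y ∘ f) (c ∘ f) := by
  unfold inn
  rw [sum_split hij hf hr (fun m => y m * c m)]
  rfl

end Split


lemma inn_add_left {n : ℕ} (u v w : Fin n → ZMod 2) : inn (u + v) w = inn u w + inn v w := by
  rw [inn_comm, inn_add_right, inn_comm w u, inn_comm w v]

lemma z2_add_self (a : ZMod 2) : a + a = 0 := by revert a; decide

lemma inn_shadow_one {n : ℕ} {C : Submodule (ZMod 2) (Fin n → ZMod 2)} (hsd : IsSelfDual C)
    {y c : Fin n → ZMod 2} (hy : y ∈ shadow C) (hc : c ∈ C) (h2 : wt c % 4 = 2) :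
    inn y c = 1 := by
  obtain ⟨h1, hnc⟩ := hy
  rcases zc (inn y c) with h0 | h0
  · exfalso
    apply hnc
    refine (hsd y).mpr (fun c' hc' => ?_)
    have hev : wt c' % 2 = 0 := wt_even_of_inn_self ((hsd c').mp hc' c' hc')
    rcases (by omega : wt c' % 4 = 0 ∨ wt c' % 4 = 2) with h4 | h4
    · exact h1 c' hc' h4
    · have hcc' : inn c' c = 0 := (hsd c').mp hc' c hc
      have hm : wt (c' + c) % 4 = 0 := by rw [wt_add_mod4 hcc']; omega
      have hsum0 := h1 (c' + c) (C.add_mem hc' hc) hm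
      rw [inn_add_right, h0, add_zero] at hsum0
      exact hsum0
  · exact h0
lemma z2_eq_iff {a b : ZMod 2} : a = b ↔ a + b = 0 := by revert a b; decide
lemma z2_mix {a b c d : ZMod 2} (h1 : a + b = 1) (h2 : c + d = 1) :
    a + c = b + d := by revert a b c d; decide

lemma z2_ne_iff {a b : ZMod 2} : a ≠ b ↔ a + b = 1 := by revert a b; decide

theorem stmt_8 (n d s : ℕ) (hd4 : d % 4 = 0) (hd0 : d ≠ 0) (hs : 3 ≤ s)
    (C : Submodule (ZMod 2) (Fin (4*n+2) → ZMod 2))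
    (hsd : IsSelfDual C) (hT : ∃ c ∈ C, wt c % 4 = 2)
    (hmin : HasMinDist C (d+2))
    (hsmin : (∃ y ∈ shadow C, wt y = s) ∧ ∀ y ∈ shadow C, s ≤ wt y) :
    ∃ i j : Fin (4*n+2), i ≠ j ∧
      ∀ f : Fin (4*n) → Fin (4*n+2), Function.Injective f →
        Set.range f = ({i, j} : Set (Fin (4*n+2)))ᶜ →
        ∀ C' : Submodule (ZMod 2) (Fin (4*n) → ZMod 2),
          (C' : Set (Fin (4*n) → ZMod 2)) = {x | ∃ c ∈ C, c i = c j ∧ x = c ∘ f} →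
          IsSelfDual C' ∧ Module.finrank (ZMod 2) ↥C' = 2*n ∧ HasMinDist C' d ∧
          (∃ y ∈ shadow C', wt y = s - 1) ∧ ∀ y ∈ shadow C', s - 1 ≤ wt y := by
  obtain ⟨⟨y₀, hy₀S, hy₀w⟩, hSlb⟩ := hsmin
  obtain ⟨⟨c₀, hc₀C, hc₀ne, hc₀w⟩, hClb⟩ := hmin
  have hc₀2 : wt c₀ % 4 = 2 := by omega
  have hyc₀ : inn y₀ c₀ = 1 := inn_shadow_one hsd hy₀S hc₀C hc₀2
  -- choose i
  have hi : ∃ i, y₀ i ≠ 0 ∧ c₀ i ≠ 0 := by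
    by_contra h
    push_neg at h
    rw [inn_eq_card] at hyc₀
    have : Finset.univ.filter (fun m => y₀ m ≠ 0 ∧ c₀ m ≠ 0) = ∅ := by
      apply Finset.filter_eq_empty_iff.mpr
      intro m _
      rintro ⟨h1, h2⟩
      exact h2 (h m h1)
    rw [this] at hyc₀
    simp at hyc₀
  obtain ⟨i, hy₀i, hc₀i⟩ := hi
  -- choose j
  have hj : ∃ jj, c₀ jj ≠ 0 ∧ y₀ jj = 0 := by
    by_contra h
    push_neg at h
    rw [inn_eq_card] at hyc₀
    have heq : Finset.univ.filter (fun m => y₀ m ≠ 0 ∧ c₀ m ≠ 0)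
        = Finset.univ.filter (fun m => c₀ m ≠ 0) := by
      apply Finset.filter_congr
      intro m _
      constructor
      · rintro ⟨_, h2⟩; exact h2
      · intro h2; exact ⟨h m h2, h2⟩
    rw [heq] at hyc₀
    have : ((wt c₀ : ℕ) : ZMod 2) = 1 := hyc₀
    rw [hc₀w] at this
    have h2 : ((d + 2 : ℕ) : ZMod 2) = 0 := by
      rw [ZMod.natCast_eq_zero_iff]; omega
    rw [h2] at this
    exact absurd this (by decide)
  obtain ⟨j, hc₀j, hy₀j⟩ := hj
  have hij : i ≠ j := by
    intro h; rw [h, hy₀j] at hy₀i; exact hy₀i rfl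
  refine ⟨i, j, hij, ?_⟩
  intro f hf hr C' hC'
  -- basic membership facts
  have hmemC' : ∀ x, x ∈ C' ↔ ∃ c ∈ C, c i = c j ∧ x = c ∘ f := by
    intro x
    rw [← SetLike.mem_coe, hC']
    exact Iff.rfl
  have hd6 : 6 ≤ d + 2 := by omega
  have key : ∀ v : Fin (4*n+2) → ZMod 2,
      (∀ c ∈ C, wt c % 4 = 0 → inn v c = 0) → v ≠ 0 → 3 ≤ wt v := by
    intro v hv hvne
    by_cases hvC : v ∈ C
    · have := hClb v hvC hvne; omega
    · have : v ∈ shadow C := ⟨hv, hvC⟩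
      have := hSlb v this; omega
  have hiR : i ∉ Set.range f := by rw [hr]; simp
  have hjR : j ∉ Set.range f := by rw [hr]; simp
  have hfR : ∀ t, f t ≠ i ∧ f t ≠ j := by
    intro t
    have : f t ∈ Set.range f := ⟨t, rfl⟩
    rw [hr] at this
    simpa using this
  -- indicator bounds
  have hind : ∀ a : ZMod 2, (if a ≠ 0 then 1 else 0) ≤ 1 := by
    intro a; split <;> omega
  -- puncture injectivity on D
  have hpinj : ∀ c, c ∈ C → c i = c j → c ∘ f = 0 → c = 0 := by
    intro c hc hcij h0
    by_contra hne
    have h3 : 3 ≤ wt c := key c (fun c' hc' _ => (hsd c).mp hc c' hc') hne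
    have hsp := wt_split hij hf hr c
    rw [h0, wt_zero] at hsp
    have := hind (c i); have := hind (c j)
    omega
  -- self-orthogonality of C'
  have horthC' : ∀ u ∈ C', ∀ v ∈ C', inn u v = 0 := by
    intro u hu v hv
    obtain ⟨c, hc, hcij, rfl⟩ := (hmemC' u).mp hu
    obtain ⟨e, he, heij, rfl⟩ := (hmemC' v).mp hv
    have E := inn_split hij hf hr c e
    rw [(hsd c).mp hc e he, hcij, heij, z2_add_self, zero_add] at E
    exact E.symm
  -- mixed doubly-even codeword exists
  have hmixed0 : ∃ w ∈ C, wt w % 4 = 0 ∧ w i ≠ w j := by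
    by_contra h
    push_neg at h
    set χ : Fin (4*n+2) → ZMod 2 := fun m => if m = i then 1 else if m = j then 1 else 0 with hχ
    have hχf : χ ∘ f = 0 := by
      funext t
      obtain ⟨h1, h2⟩ := hfR t
      simp [hχ, Function.comp, h1, h2]
    have hχi : χ i = 1 := by simp [hχ]
    have hχj : χ j = 1 := by simp [hχ, hij.symm]
    have hχinn : ∀ c : Fin (4*n+2) → ZMod 2, inn χ c = c i + c j := by
      intro c
      rw [inn_split hij hf hr, hχf, hχi, hχj]
      have : inn (0 : Fin (4*n) → ZMod 2) (c ∘ f) = 0 := by simp [inn]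
      rw [this, add_zero, one_mul, one_mul]
    have hχmem : ∀ c ∈ C, wt c % 4 = 0 → inn χ c = 0 := by
      intro c hc hw
      rw [hχinn, ← (h c hc hw), z2_add_self]
    have hχne : χ ≠ 0 := by
      intro h0
      have : χ i = 0 := by rw [h0]; rfl
      rw [hχi] at this
      exact absurd this (by decide)
    have h3 := key χ hχmem hχne
    have hsp := wt_split hij hf hr χ
    rw [hχf, wt_zero, hχi, hχj] at hsp
    simp at hsp
    omega
  -- finrank of C
  have hrkC : Module.finrank (ZMod 2) C = 2*n + 1 := by
    have := finrank_of_selfdual hsd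
    omega
  -- the puncture map and D
  set φ : (Fin (4*n+2) → ZMod 2) →ₗ[ZMod 2] (Fin (4*n) → ZMod 2) :=
    LinearMap.funLeft (ZMod 2) (ZMod 2) f with hφ
  set L : (Fin (4*n+2) → ZMod 2) →ₗ[ZMod 2] ZMod 2 :=
    (LinearMap.proj (R := ZMod 2) (φ := fun _ : Fin (4*n+2) => ZMod 2) i)
      + (LinearMap.proj (R := ZMod 2) (φ := fun _ : Fin (4*n+2) => ZMod 2) j) with hL
  have hLap : ∀ v : Fin (4*n+2) → ZMod 2, L v = v i + v j := fun v => rfl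
  set D : Submodule (ZMod 2) (Fin (4*n+2) → ZMod 2) := C ⊓ LinearMap.ker L with hD
  have hmemD : ∀ v, v ∈ D ↔ v ∈ C ∧ v i = v j := by
    intro v
    rw [hD, Submodule.mem_inf, LinearMap.mem_ker, hLap, ← z2_eq_iff]
  have hC'map : C' = Submodule.map φ D := by
    ext x
    rw [hmemC', Submodule.mem_map]
    constructor
    · rintro ⟨c, hc, hcij, rfl⟩
      exact ⟨c, (hmemD c).mpr ⟨hc, hcij⟩, rfl⟩
    · rintro ⟨c, hcD, rfl⟩
      obtain ⟨hc, hcij⟩ := (hmemD c).mp hcD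
      exact ⟨c, hc, hcij, rfl⟩
  have hrkD : Module.finrank (ZMod 2) D = 2*n := by
    have hLsurj : Function.Surjective (L.domRestrict C) := by
      intro z
      obtain ⟨w, hw, _, hwij⟩ := hmixed0
      rcases zc z with rfl | rfl
      · exact ⟨⟨0, C.zero_mem⟩, by simp⟩
      · refine ⟨⟨w, hw⟩, ?_⟩
        rw [LinearMap.domRestrict_apply, hLap]
        exact z2_ne_iff.mp hwij
    have hrn := LinearMap.finrank_range_add_finrank_ker (L.domRestrict C)
    rw [LinearMap.range_eq_top.mpr hLsurj] at hrn
    rw [finrank_top] at hrn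
    have h1 : Module.finrank (ZMod 2) (ZMod 2) = 1 := Module.finrank_self _
    rw [h1, hrkC] at hrn
    have hker : LinearMap.ker (L.domRestrict C) = Submodule.comap C.subtype (LinearMap.ker L) :=
      LinearMap.ker_domRestrict C L
    have hfin1 : Module.finrank (ZMod 2)
        ((Submodule.comap C.subtype (LinearMap.ker L)).map C.subtype)
        = Module.finrank (ZMod 2) (Submodule.comap C.subtype (LinearMap.ker L)) :=
      Submodule.finrank_map_subtype_eq C _
    rw [Submodule.map_comap_subtype] at hfin1
    rw [hker] at hrn
    rw [hD]
    omega
  have hrkC' : Module.finrank (ZMod 2) C' = 2*n := by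
    have hkerψ : LinearMap.ker (φ.domRestrict D) = ⊥ := by
      rw [Submodule.eq_bot_iff]
      rintro ⟨v, hvD⟩ hv
      obtain ⟨hvC, hvij⟩ := (hmemD v).mp hvD
      have : φ v = 0 := hv
      have hv0 : v = 0 := hpinj v hvC hvij this
      exact Subtype.ext hv0
    have hrn := LinearMap.finrank_range_add_finrank_ker (φ.domRestrict D)
    rw [hkerψ, finrank_bot, add_zero, LinearMap.range_domRestrict] at hrn
    rw [hC'map, hrn, hrkD]
  have hsdC' : IsSelfDual C' := selfdual_of_selforth horthC' (by omega)
    -- min distance of C'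
  have hminC' : HasMinDist C' d := by
    constructor
    · have hc₀i1 : c₀ i = 1 := (zc _).resolve_left hc₀i
      have hc₀j1 : c₀ j = 1 := (zc _).resolve_left hc₀j
      have hc₀ij : c₀ i = c₀ j := by rw [hc₀i1, hc₀j1]
      have hsp := wt_split hij hf hr c₀
      rw [if_pos hc₀i, if_pos hc₀j] at hsp
      have hwt : wt (c₀ ∘ f) = d := by omega
      refine ⟨c₀ ∘ f, (hmemC' _).mpr ⟨c₀, hc₀C, hc₀ij, rfl⟩, ?_, hwt⟩
      intro h0
      rw [h0, wt_zero] at hwt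
      exact hd0 hwt.symm
    · intro x hx hxne
      obtain ⟨c, hc, hcij, rfl⟩ := (hmemC' x).mp hx
      have hcne : c ≠ 0 := by
        intro h0
        apply hxne
        rw [h0]
        rfl
      have hge := hClb c hc hcne
      have hsp := wt_split hij hf hr c
      have := hind (c i); have := hind (c j)
      omega
  have hCf_mem : ∀ c, c ∈ C → c i = c j → c ∘ f ∈ C' :=
    fun c hc h => (hmemC' _).mpr ⟨c, hc, h, rfl⟩
  -- upward shadow lemma
  have hup : ∀ y, y ∈ shadow C → y i + y j = 1 →
      (y ∘ f ∈ shadow C' ∧ wt (y ∘ f) + 1 = wt y) := by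
    intro y hyS hyij
    obtain ⟨hy1, hy2⟩ := hyS
    have hwt : wt (y ∘ f) + 1 = wt y := by
      have hsp := wt_split hij hf hr y
      rcases zc (y i) with h1 | h1 <;> rcases zc (y j) with h2 | h2
      · rw [h1, h2] at hyij; exact absurd hyij (by decide)
      · rw [if_neg (by simp [h1]), if_pos (by simp [h2])] at hsp; omega
      · rw [if_pos (by simp [h1]), if_neg (by simp [h2])] at hsp; omega
      · rw [h1, h2] at hyij; exact absurd hyij (by decide)
    refine ⟨⟨?_, ?_⟩, hwt⟩
    · intro x' hx' hw'
      obtain ⟨c, hc, hcij, rfl⟩ := (hmemC' x').mp hx'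
      have E := inn_split hij hf hr y c
      have hsp := wt_split hij hf hr c
      rcases zc (c i) with h1 | h1
      · have h2 : c j = 0 := by rw [← hcij]; exact h1
        have hcw : wt c % 4 = 0 := by
          rw [if_neg (by simp [h1]), if_neg (by simp [h2])] at hsp; omega
        rw [hy1 c hc hcw, h1, h2, mul_zero, mul_zero, add_zero, zero_add] at E
        exact E.symm
      · have h2 : c j = 1 := by rw [← hcij]; exact h1
        have hcw : wt c % 4 = 2 := by
          rw [if_pos (by simp [h1]), if_pos (by simp [h2])] at hsp; omega
        have hyc := inn_shadow_one hsd ⟨hy1, hy2⟩ hc hcw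
        rw [hyc, h1, h2, mul_one, mul_one, hyij] at E
        rcases zc (inn (y ∘ f) (c ∘ f)) with hX | hX
        · exact hX
        · rw [hX] at E; exact absurd E (by decide)
    · intro hmem
      obtain ⟨c, hc, hcij, heq⟩ := (hmemC' _).mp hmem
      have huf : (y + c) ∘ f = 0 := by
        funext t
        have h1 : y (f t) = c (f t) := congrFun heq t
        show y (f t) + c (f t) = 0
        rw [h1]; exact z2_add_self _
      have humem : ∀ c' ∈ C, wt c' % 4 = 0 → inn (y + c) c' = 0 := by
        intro c' hc' hw'
        rw [inn_add_left, hy1 c' hc' hw', (hsd c).mp hc c' hc', add_zero]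
      have hune : y + c ≠ 0 := by
        intro h0
        have hz : (y + c) i + (y + c) j = 0 := by rw [h0]; rfl
        have h2 : (y + c) i + (y + c) j = 1 := by
          show (y i + c i) + (y j + c j) = 1
          have hcij0 : c i + c j = 0 := z2_eq_iff.mp hcij
          linear_combination hyij + hcij0
        rw [hz] at h2; exact absurd h2 (by decide)
      have h3 := key (y + c) humem hune
      have hsp := wt_split hij hf hr (y + c)
      rw [huf, wt_zero] at hsp
      have := hind ((y + c) i); have := hind ((y + c) j)
      omega
  have hy₀ij : y₀ i + y₀ j = 1 := by
    have h1 : y₀ i = 1 := (zc _).resolve_left hy₀i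
    rw [h1, hy₀j, add_zero]
  obtain ⟨hy₀f, hy₀fw⟩ := hup y₀ hy₀S hy₀ij
  -- Fact A
  have hfactA : ∀ x, x ∈ shadow C' → ∀ c, c ∈ C → wt c % 4 = 0 → c i = c j →
      inn x (c ∘ f) + c j = 0 := by
    intro x hx c hc hw hcij
    have hsp := wt_split hij hf hr c
    rcases zc (c i) with h1 | h1
    · have h2 : c j = 0 := by rw [← hcij]; exact h1
      have hcw : wt (c ∘ f) % 4 = 0 := by
        rw [if_neg (by simp [h1]), if_neg (by simp [h2])] at hsp; omega
      rw [hx.1 (c ∘ f) (hCf_mem c hc hcij) hcw, h2, add_zero]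
    · have h2 : c j = 1 := by rw [← hcij]; exact h1
      have hcw : wt (c ∘ f) % 4 = 2 := by
        rw [if_pos (by simp [h1]), if_pos (by simp [h2])] at hsp; omega
      rw [inn_shadow_one hsdC' hx (hCf_mem c hc hcij) hcw, h2]
      decide
  -- downward shadow bound
  have hdown : ∀ y ∈ shadow C', s - 1 ≤ wt y := by
    intro x hx
    have hstar : ∃ a : ZMod 2, ∀ c, c ∈ C → wt c % 4 = 0 →
        inn x (c ∘ f) + a * (c i + c j) + c j = 0 := by
      by_cases hmix : ∃ c₁, c₁ ∈ C ∧ wt c₁ % 4 = 0 ∧ c₁ i ≠ c₁ j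
      · obtain ⟨c₁, hc₁, hw₁, hm₁⟩ := hmix
        refine ⟨inn x (c₁ ∘ f) + c₁ j, ?_⟩
        intro c hc hw
        by_cases hcc : c i = c j
        · have hA := hfactA x hx c hc hw hcc
          rw [z2_eq_iff.mp hcc, mul_zero, add_zero]
          exact hA
        · have hsum : c i + c j = 1 := z2_ne_iff.mp hcc
          have hcsum : (c + c₁) i = (c + c₁) j := by
            show c i + c₁ i = c j + c₁ j
            exact z2_mix hsum (z2_ne_iff.mp hm₁)
          have hwsum : wt (c + c₁) % 4 = 0 := by
            rw [wt_add_mod4 ((hsd c).mp hc c₁ hc₁)]; omega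
          have hA := hfactA x hx (c + c₁) (C.add_mem hc hc₁) hwsum hcsum
          have hexp : ((c + c₁) ∘ f) = (c ∘ f) + (c₁ ∘ f) := rfl
          rw [hexp, inn_add_right] at hA
          have hj' : (c + c₁) j = c j + c₁ j := rfl
          rw [hj'] at hA
          rw [hsum, mul_one]
          linear_combination hA
      · refine ⟨0, ?_⟩
        intro c hc hw
        have hcc : c i = c j := by
          by_contra hne
          exact hmix ⟨c, hc, hw, hne⟩
        have hA := hfactA x hx c hc hw hcc
        rw [zero_mul, add_zero]
        exact hA
    obtain ⟨a, hstar⟩ := hstar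
    set y := Function.extend f x (fun m => if m = i then a else a + 1) with hy
    have hyf : y ∘ f = x := by
      funext t
      show y (f t) = x t
      rw [hy]
      exact hf.extend_apply _ _ t
    have hyi : y i = a := by
      rw [hy, Function.extend_apply' _ _ _ (by simpa using hiR)]
      simp
    have hyj : y j = a + 1 := by
      rw [hy, Function.extend_apply' _ _ _ (by simpa using hjR)]
      simp [hij.symm]
    have hymem : ∀ c ∈ C, wt c % 4 = 0 → inn y c = 0 := by
      intro c hc hw
      rw [inn_split hij hf hr, hyf, hyi, hyj]
      linear_combination hstar c hc hw
    obtain ⟨u, hu, hu2⟩ := hT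
    have hcstar : ∃ cs, cs ∈ C ∧ wt cs % 4 = 2 ∧ cs i = cs j := by
      by_cases huij : u i = u j
      · exact ⟨u, hu, hu2, huij⟩
      · obtain ⟨w, hw, hw4, hwij⟩ := hmixed0
        refine ⟨u + w, C.add_mem hu hw, ?_, ?_⟩
        · rw [wt_add_mod4 ((hsd u).mp hu w hw)]; omega
        · show u i + w i = u j + w j
          exact z2_mix (z2_ne_iff.mp huij) (z2_ne_iff.mp hwij)
    obtain ⟨cs, hcs, hcs2, hcsij⟩ := hcstar
    have hynotC : y ∉ (C : Set (Fin (4*n+2) → ZMod 2)) := by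
      intro hyC
      have h0 : inn y cs = 0 := (hsd y).mp hyC cs hcs
      have E := inn_split hij hf hr y cs
      rw [hyi, hyj, hyf, h0] at E
      have hsp := wt_split hij hf hr cs
      rcases zc (cs i) with h1 | h1
      · have h2 : cs j = 0 := by rw [← hcsij]; exact h1
        have hcw : wt (cs ∘ f) % 4 = 2 := by
          rw [if_neg (by simp [h1]), if_neg (by simp [h2])] at hsp; omega
        rw [inn_shadow_one hsdC' hx (hCf_mem cs hcs hcsij) hcw, h1, h2] at E
        simp at E
      · have h2 : cs j = 1 := by rw [← hcsij]; exact h1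
        have hcw : wt (cs ∘ f) % 4 = 0 := by
          rw [if_pos (by simp [h1]), if_pos (by simp [h2])] at hsp; omega
        rw [hx.1 (cs ∘ f) (hCf_mem cs hcs hcsij) hcw, h1, h2, mul_one, mul_one, add_zero] at E
        have ha1 : a + (a + 1) = 1 := by
          rcases zc a with h | h <;> rw [h] <;> decide
        rw [ha1] at E
        exact absurd E (by decide)
    have hyS : y ∈ shadow C := ⟨hymem, hynotC⟩
    have hge := hSlb y hyS
    have hsp := wt_split hij hf hr y
    rw [hyf, hyi, hyj] at hsp
    have hone : (if a ≠ 0 then 1 else 0) + (if a + 1 ≠ 0 then 1 else 0) = 1 := by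
      rcases zc a with h | h <;> rw [h] <;> decide
    rw [hone] at hsp
    omega
  exact ⟨hsdC', hrkC', hminC', ⟨y₀ ∘ f, hy₀f, by omega⟩, hdown⟩
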